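/- arXiv:1606.03898 — 2 statements merged into one kernel-verified Lean document; each statement's English description precedes it below -/
import Mathlib

section
/- Let V be a finite set with |V| = n ≥ 3. Then there exists a network N on V whose flow relation 𝔉(N) is not transitive (hence 𝔉(N) is not an order). -/
/-- A flow from `s` to `t` in the network with capacity `c`: bounded by the
capacity on every arc and conserving flow at every vertex other than `s`, `t`. -/
def IsFlow {V : Type*} [Fintype V] [DecidableEq V]
    (c : V → V → ℕ) (s t : V) (f : V → V → ℕ) : Prop :=
  (∀ x y : V, x ≠ y → f x y ≤ c x y) ∧
  ∀ x : V, x ≠ s → x ≠ t →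
    ∑ y ∈ Finset.univ.erase x, f x y = ∑ y ∈ Finset.univ.erase x, f y x

/-- The value of a flow `f` from `s`: outflow of `s` minus inflow of `s`. -/
def flowValue {V : Type*} [Fintype V] [DecidableEq V]
    (f : V → V → ℕ) (s : V) : ℤ :=
  (∑ y ∈ Finset.univ.erase s, (f s y : ℤ)) -
    ∑ y ∈ Finset.univ.erase s, (f y s : ℤ)

/-- The maximum flow value `φ_{st}` from `s` to `t` in the network `c`. -/
noncomputable def maxFlow {V : Type*} [Fintype V] [DecidableEq V]
    (c : V → V → ℕ) (s t : V) : ℕ :=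
  sSup {n : ℕ | ∃ f : V → V → ℕ, IsFlow c s t f ∧ flowValue f s = (n : ℤ)}

/-- The flow relation `𝔉(N)`: `x ⪰ y` iff `x = y` or `x ≠ y` and `φ_{xy} ≥ φ_{yx}`. -/
def FlowRel {V : Type*} [Fintype V] [DecidableEq V]
    (c : V → V → ℕ) (x y : V) : Prop :=
  x = y ∨ (x ≠ y ∧ maxFlow c y x ≤ maxFlow c x y)

/-- A relation is complete if any two elements are comparable. -/
def CompleteRel {V : Type*} (R : V → V → Prop) : Prop :=
  ∀ x y : V, R x y ∨ R y x

/-- The strict part `S(R)` of a relation `R`. -/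
def StrictPart {V : Type*} (R : V → V → Prop) (x y : V) : Prop :=
  R x y ∧ ¬ R y x

/-- A relation is quasi-transitive if its strict part is transitive. -/
def QuasiTransitive {V : Type*} (R : V → V → Prop) : Prop :=
  Transitive (StrictPart R)

/-- The outdegree of `x` in the network `c`. -/
def outdeg {V : Type*} [Fintype V] [DecidableEq V] (c : V → V → ℕ) (x : V) : ℕ :=
  ∑ y ∈ Finset.univ.erase x, c x y

/-- The indegree of `x` in the network `c`. -/
def indeg {V : Type*} [Fintype V] [DecidableEq V] (c : V → V → ℕ) (x : V) : ℕ :=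
  ∑ y ∈ Finset.univ.erase x, c y x

section Aux
open Finset

variable {V : Type*} [Fintype V] [DecidableEq V]

lemma zero_isFlow (c : V → V → ℕ) (s t : V) : IsFlow c s t (fun _ _ => 0) :=
  ⟨fun _ _ _ => Nat.zero_le _, fun _ _ _ => rfl⟩

lemma flowValue_zero (s : V) : flowValue (fun _ _ => (0:ℕ)) s = 0 := by
  simp [flowValue]

lemma flowValue_le_outdeg (c : V → V → ℕ) (s t : V) (f : V → V → ℕ)
    (hf : IsFlow c s t f) : flowValue f s ≤ (outdeg c s : ℤ) := by
  unfold flowValue outdeg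
  have h1 : ∑ y ∈ univ.erase s, (f s y : ℤ) ≤ ∑ y ∈ univ.erase s, (c s y : ℤ) := by
    refine Finset.sum_le_sum fun y hy => ?_
    exact_mod_cast hf.1 s y (Finset.ne_of_mem_erase hy).symm
  have h2 : (0:ℤ) ≤ ∑ y ∈ univ.erase s, (f y s : ℤ) :=
    Finset.sum_nonneg fun y _ => Int.natCast_nonneg _
  push_cast
  linarith

lemma sum_off_diag_comm (g : V → V → ℤ) :
    ∑ x, ∑ y ∈ univ.erase x, g x y = ∑ x, ∑ y ∈ univ.erase x, g y x := by
  have key : ∀ h : V → V → ℤ, (∑ x, ∑ y ∈ univ.erase x, h x y)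
      = ∑ x, ∑ y, if y = x then 0 else h x y := by
    intro h
    refine Finset.sum_congr rfl fun x _ => ?_
    rw [← Finset.sum_erase (univ) (f := fun y => if y = x then 0 else h x y) (a := x)
      (by simp : (if x = x then (0:ℤ) else h x x) = 0)]
    refine Finset.sum_congr rfl fun y hy => ?_
    rw [if_neg (Finset.ne_of_mem_erase hy)]
  rw [key g, key (fun x y => g y x)]
  rw [Finset.sum_comm]
  refine Finset.sum_congr rfl fun x _ => Finset.sum_congr rfl fun y _ => ?_
  simp [eq_comm]

lemma flowValue_le_indeg (c : V → V → ℕ) (s t : V) (hst : s ≠ t) (f : V → V → ℕ)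
    (hf : IsFlow c s t f) : flowValue f s ≤ (indeg c t : ℤ) := by
  set F : V → ℤ := fun x =>
    (∑ y ∈ univ.erase x, (f x y : ℤ)) - ∑ y ∈ univ.erase x, (f y x : ℤ) with hF
  have hsum : ∑ x, F x = 0 := by
    rw [Finset.sum_sub_distrib, sum_off_diag_comm (fun x y => (f x y : ℤ)), sub_self]
  have hts : t ∈ (univ.erase s) := by simp [hst.symm]
  have h1 : ∑ x, F x = F s + ∑ x ∈ univ.erase s, F x :=
    (Finset.add_sum_erase univ F (mem_univ s)).symm
  have h2 : ∑ x ∈ univ.erase s, F x = F t + ∑ x ∈ (univ.erase s).erase t, F x :=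
    (Finset.add_sum_erase _ F hts).symm
  have h3 : ∑ x ∈ (univ.erase s).erase t, F x = 0 := by
    refine Finset.sum_eq_zero fun x hx => ?_
    have hxt : x ≠ t := Finset.ne_of_mem_erase hx
    have hxs : x ≠ s := Finset.ne_of_mem_erase (Finset.mem_of_mem_erase hx)
    have := hf.2 x hxs hxt
    simp only [hF]
    rw [← Nat.cast_sum, ← Nat.cast_sum, this, sub_self]
  have hFs : F s = - F t := by
    rw [h1, h2, h3] at hsum; linarith
  have hvt : flowValue f s = F s := rfl
  rw [hvt, hFs]
  have h4 : ∑ y ∈ univ.erase t, (f y t : ℤ) ≤ ∑ y ∈ univ.erase t, (c y t : ℤ) := by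
    refine Finset.sum_le_sum fun y hy => ?_
    exact_mod_cast hf.1 y t (Finset.ne_of_mem_erase hy)
  have h5 : (0:ℤ) ≤ ∑ y ∈ univ.erase t, (f t y : ℤ) :=
    Finset.sum_nonneg fun y _ => Int.natCast_nonneg _
  have : (indeg c t : ℤ) = ∑ y ∈ univ.erase t, (c y t : ℤ) := by
    unfold indeg; push_cast; rfl
  simp only [hF]
  linarith

lemma maxFlow_le (c : V → V → ℕ) (s t : V) (B : ℕ)
    (hB : ∀ f, IsFlow c s t f → flowValue f s ≤ (B:ℤ)) : maxFlow c s t ≤ B := by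
  refine csSup_le ⟨0, fun _ _ => 0, zero_isFlow c s t, by simp [flowValue_zero]⟩ ?_
  rintro n ⟨f, hf, hv⟩
  have := hB f hf
  rw [hv] at this
  exact_mod_cast this

lemma le_maxFlow (c : V → V → ℕ) (s t : V) (f : V → V → ℕ) (hf : IsFlow c s t f)
    (n : ℕ) (hv : flowValue f s = (n:ℤ)) : n ≤ maxFlow c s t := by
  apply le_csSup
  · refine ⟨outdeg c s, fun m hm => ?_⟩
    obtain ⟨g, hg, hvg⟩ := hm
    have := flowValue_le_outdeg c s t g hg
    rw [hvg] at this
    exact_mod_cast this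
  · exact ⟨f, hf, hv⟩

lemma single_arc_isFlow (c : V → V → ℕ) (u v : V) (k : ℕ) (hk : k ≤ c u v) :
    IsFlow c u v (fun x y => if x = u ∧ y = v then k else 0) := by
  constructor
  · intro x y _
    by_cases h : x = u ∧ y = v
    · simp only [if_pos h]; rw [h.1, h.2]; exact hk
    · simp [h]
  · intro x hxu hxv
    rw [Finset.sum_eq_zero fun y _ => by simp [hxu],
        Finset.sum_eq_zero fun y _ => by simp [hxv]]

lemma single_arc_value (u v : V) (huv : u ≠ v) (k : ℕ) :
    flowValue (fun x y => if x = u ∧ y = v then k else 0) u = (k:ℤ) := by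
  simp [flowValue, Finset.sum_ite_eq', huv, huv.symm, Nat.cast_ite, Finset.mem_erase]
end Aux

/-- If `|V| ≥ 3`, there is a network on `V` whose flow relation is not
transitive (hence not an order). -/
theorem stmt3 {V : Type*} [Fintype V] [DecidableEq V]
    (hV : 3 ≤ Fintype.card V) :
    ∃ c : V → V → ℕ, ¬ Transitive (FlowRel c) := by
  classical
  -- obtain three distinct elements a b d
  have h1 : 1 < Fintype.card V := by omega
  obtain ⟨a, b, hab⟩ := Fintype.exists_pair_of_one_lt_card h1
  have hab' := hab
  have : ∃ d : V, d ≠ a ∧ d ≠ b := by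
    by_contra h
    push_neg at h
    have hsub : (Finset.univ : Finset V) ⊆ {a, b} := by
      intro x _
      rcases Classical.em (x = a) with h1 | h1
      · simp [h1]
      · have := h x h1; simp [this]
    have := Finset.card_le_card hsub
    have hle : ({a, b} : Finset V).card ≤ 2 := Finset.card_insert_le _ _ |>.trans (by simp)
    rw [Finset.card_univ] at this
    omega
  obtain ⟨d, hda, hdb⟩ := this
  have hbd : b ≠ d := hdb.symm
  have had : a ≠ d := hda.symm
  set c : V → V → ℕ := fun x y =>
    if x = a ∧ y = b then 1 else if x = b ∧ y = d then 1 else if x = d ∧ y = a then 2 else 0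
    with hc
  refine ⟨c, fun htr => ?_⟩
  -- capacities
  have hcab : c a b = 1 := by simp [hc]
  have hcbd : c b d = 1 := by simp [hc, hab.symm, hbd]
  have hcda : c d a = 2 := by simp [hc, hda, hdb]
  -- degree computations
  have houta : outdeg c a = 1 := by
    unfold outdeg
    have : ∀ y, c a y = if y = b then 1 else 0 := by
      intro y; simp [hc, hab, had]
    simp only [this]
    rw [Finset.sum_ite_eq']
    simp [hab.symm]
  have houtb : outdeg c b = 1 := by
    unfold outdeg
    have : ∀ y, c b y = if y = d then 1 else 0 := by
      intro y; simp [hc, hab.symm, hbd]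
    simp only [this]
    rw [Finset.sum_ite_eq']
    simp [hdb]
  have hina : indeg c a = 2 := by
    unfold indeg
    have : ∀ y, c y a = if y = d then 2 else 0 := by
      intro y; simp [hc, hab, had]
    simp only [this]
    rw [Finset.sum_ite_eq']
    simp [hda]
  have hinb : indeg c b = 1 := by
    unfold indeg
    have : ∀ y, c y b = if y = a then 1 else 0 := by
      intro y; simp [hc, hbd, hab.symm]
    simp only [this]
    rw [Finset.sum_ite_eq']
    simp [hab]
  -- lower bounds via single-arc flows
  have hab1 : 1 ≤ maxFlow c a b :=
    le_maxFlow c a b _ (single_arc_isFlow c a b 1 (by omega)) 1 (single_arc_value a b hab 1)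
  have hbd1 : 1 ≤ maxFlow c b d :=
    le_maxFlow c b d _ (single_arc_isFlow c b d 1 (by omega)) 1 (single_arc_value b d hbd 1)
  have hda2 : 2 ≤ maxFlow c d a :=
    le_maxFlow c d a _ (single_arc_isFlow c d a 2 (by omega)) 2 (single_arc_value d a hda 2)
  -- upper bounds via cuts
  have hba1 : maxFlow c b a ≤ 1 := by
    refine maxFlow_le c b a 1 fun f hf => ?_
    have := flowValue_le_outdeg c b a f hf
    rw [houtb] at this; exact_mod_cast this
  have hdb1 : maxFlow c d b ≤ 1 := by
    refine maxFlow_le c d b 1 fun f hf => ?_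
    have := flowValue_le_indeg c d b hdb f hf
    rw [hinb] at this; exact_mod_cast this
  have had1 : maxFlow c a d ≤ 1 := by
    refine maxFlow_le c a d 1 fun f hf => ?_
    have := flowValue_le_outdeg c a d f hf
    rw [houta] at this; exact_mod_cast this
  -- non-transitivity
  have r1 : FlowRel c a b := Or.inr ⟨hab, le_trans hba1 hab1⟩
  have r2 : FlowRel c b d := Or.inr ⟨hbd, le_trans hdb1 hbd1⟩
  have r3 : FlowRel c a d := htr r1 r2
  rcases r3 with h | ⟨_, h⟩
  · exact had h
  · omega
end

section
/- Let R be a complete and quasi-transitive relation on a finite set V with |V| ≥ 2, and let N_R be the network on V with capacity c_R(x,y) = 1 if (x,y) is in the strict part S(R) and c_R(x,y) = 0 otherwise. Then the flow relation of N_R equals R: 𝔉(N_R) = R. -/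
section Aux
open Finset
variable {V : Type*} [Fintype V] [DecidableEq V]

lemma cut_bound (c : V → V → ℕ) (s t : V) (T : Finset V)
    (hs : s ∈ T) (ht : t ∉ T)
    (hcut : ∀ u ∈ T, ∀ w, w ∉ T → c u w = 0)
    (f : V → V → ℕ) (hf : IsFlow c s t f) :
    flowValue f s ≤ 0 := by
  have hfull : ∀ v, ∑ w ∈ univ.erase v, ((f v w : ℤ) - (f w v : ℤ))
      = ∑ w, ((f v w : ℤ) - (f w v : ℤ)) := by
    intro v; exact Finset.sum_erase _ (by simp)
  have hval : flowValue f s = ∑ v ∈ T, ∑ w, ((f v w : ℤ) - (f w v : ℤ)) := by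
    rw [Finset.sum_eq_single_of_mem s hs]
    · rw [← hfull, Finset.sum_sub_distrib]; rfl
    · intro v hv hvs
      have hvt : v ≠ t := fun h => ht (h ▸ hv)
      have hcons := hf.2 v hvs hvt
      rw [← hfull, Finset.sum_sub_distrib, sub_eq_zero]
      exact_mod_cast hcons
  have hsplit : ∀ v, (∑ w, ((f v w : ℤ) - (f w v : ℤ)))
      = (∑ w ∈ T, ((f v w : ℤ) - (f w v : ℤ)))
        + ∑ w ∈ Tᶜ, ((f v w : ℤ) - (f w v : ℤ)) := by
    intro v; rw [Finset.sum_add_sum_compl]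
  have hdiag : (∑ v ∈ T, ∑ w ∈ T, ((f v w : ℤ) - (f w v : ℤ))) = 0 := by
    have h1 := Finset.sum_comm (s := T) (t := T)
      (f := fun v w => ((f v w : ℤ) - (f w v : ℤ)))
    have h2 : (∑ w ∈ T, ∑ v ∈ T, ((f v w : ℤ) - (f w v : ℤ)))
        = - ∑ w ∈ T, ∑ v ∈ T, ((f w v : ℤ) - (f v w : ℤ)) := by
      rw [← Finset.sum_neg_distrib]
      apply Finset.sum_congr rfl
      intro w _
      rw [← Finset.sum_neg_distrib]
      apply Finset.sum_congr rfl
      intro v _; ring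
    rw [h2] at h1
    linarith
  have hneg : (∑ v ∈ T, ∑ w ∈ Tᶜ, ((f v w : ℤ) - (f w v : ℤ))) ≤ 0 := by
    apply Finset.sum_nonpos
    intro v hv
    apply Finset.sum_nonpos
    intro w hw
    rw [Finset.mem_compl] at hw
    have hvw : v ≠ w := fun h => hw (h ▸ hv)
    have h0 : f v w = 0 := by
      have := hf.1 v w hvw
      rw [hcut v hv w hw] at this
      omega
    simp [h0]
  calc flowValue f s = ∑ v ∈ T, ∑ w, ((f v w : ℤ) - (f w v : ℤ)) := hval
    _ = (∑ v ∈ T, ∑ w ∈ T, ((f v w : ℤ) - (f w v : ℤ)))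
        + ∑ v ∈ T, ∑ w ∈ Tᶜ, ((f v w : ℤ) - (f w v : ℤ)) := by
        rw [← Finset.sum_add_distrib]; exact Finset.sum_congr rfl fun v _ => hsplit v
    _ ≤ 0 := by rw [hdiag]; simpa using hneg

lemma zero_flow_mem (c : V → V → ℕ) (s t : V) :
    (0 : ℕ) ∈ {n : ℕ | ∃ f : V → V → ℕ, IsFlow c s t f ∧ flowValue f s = (n : ℤ)} := by
  refine ⟨fun _ _ => 0, ⟨fun _ _ _ => Nat.zero_le _, fun _ _ _ => rfl⟩, by simp [flowValue]⟩

lemma maxFlow_bdd (c : V → V → ℕ) (s t : V) :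
    BddAbove {n : ℕ | ∃ f : V → V → ℕ, IsFlow c s t f ∧ flowValue f s = (n : ℤ)} := by
  refine ⟨∑ y ∈ Finset.univ.erase s, c s y, ?_⟩
  rintro n ⟨f, hf, hv⟩
  have h1 : (n : ℤ) ≤ ∑ y ∈ Finset.univ.erase s, (c s y : ℤ) := by
    rw [← hv]
    unfold flowValue
    have h2 : (∑ y ∈ Finset.univ.erase s, (f s y : ℤ))
        ≤ ∑ y ∈ Finset.univ.erase s, (c s y : ℤ) := by
      apply Finset.sum_le_sum
      intro y hy
      exact_mod_cast hf.1 s y (Ne.symm (Finset.ne_of_mem_erase hy))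
    have h3 : (0:ℤ) ≤ ∑ y ∈ Finset.univ.erase s, (f y s : ℤ) :=
      Finset.sum_nonneg fun y _ => Int.ofNat_nonneg _
    linarith
  have h4 : (n : ℤ) ≤ ((∑ y ∈ Finset.univ.erase s, c s y : ℕ) : ℤ) := by
    push_cast; exact h1
  exact_mod_cast h4

lemma maxFlow_ge_one (c : V → V → ℕ) (s t : V) (hst : s ≠ t) (hcst : 1 ≤ c s t) :
    1 ≤ maxFlow c s t := by
  apply le_csSup (maxFlow_bdd c s t)
  refine ⟨fun u v => if u = s ∧ v = t then 1 else 0, ⟨?_, ?_⟩, ?_⟩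
  · intro x y _
    by_cases h : x = s ∧ y = t
    · simp [h.1, h.2, hcst]
    · simp [h]
  · intro v hvs hvt
    rw [Finset.sum_eq_zero, Finset.sum_eq_zero]
    · intro y _; simp [hvt]
    · intro y _; simp [hvs]
  · unfold flowValue
    rw [Finset.sum_eq_single_of_mem t (by simp [Ne.symm hst]), Finset.sum_eq_zero]
    · simp
    · intro y _; simp [hst]
    · intro y _ hyt; simp [hyt]

lemma maxFlow_eq_zero (c : V → V → ℕ) (s t : V)
    (h : ¬ Relation.ReflTransGen (fun a b => 0 < c a b) s t) :
    maxFlow c s t = 0 := by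
  classical
  have hset : {n : ℕ | ∃ f : V → V → ℕ, IsFlow c s t f ∧ flowValue f s = (n : ℤ)} = {0} := by
    ext n
    simp only [Set.mem_setOf_eq, Set.mem_singleton_iff]
    constructor
    · rintro ⟨f, hf, hv⟩
      set T : Finset V := Finset.univ.filter
        (fun v => Relation.ReflTransGen (fun a b => 0 < c a b) s v) with hT
      have hsT : s ∈ T := by simp only [hT, Finset.mem_filter, Finset.mem_univ, true_and]; exact Relation.ReflTransGen.refl
      have htT : t ∉ T := by simp [hT, h]
      have hcut : ∀ u ∈ T, ∀ w, w ∉ T → c u w = 0 := by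
        intro u hu w hw
        by_contra hcw
        apply hw
        simp only [hT, Finset.mem_filter, Finset.mem_univ, true_and] at hu ⊢
        exact hu.tail (Nat.pos_of_ne_zero hcw)
      have := cut_bound c s t T hsT htT hcut f hf
      rw [hv] at this
      exact_mod_cast le_antisymm this (Int.ofNat_nonneg n)
    · rintro rfl
      exact zero_flow_mem c s t
  rw [maxFlow, hset, csSup_singleton]

lemma rtg_strict {R : V → V → Prop} (hq : Transitive (StrictPart R)) {a b : V}
    (h : Relation.ReflTransGen (StrictPart R) a b) : a = b ∨ StrictPart R a b := by
  induction h with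
  | refl => exact Or.inl rfl
  | tail _ hbc ih =>
    rcases ih with rfl | hab
    · exact Or.inr hbc
    · exact Or.inr (hq hab hbc)

end Aux

theorem stmt5' {V : Type*} [Fintype V] [DecidableEq V]
    (hV : 2 ≤ Fintype.card V) (R : V → V → Prop) [DecidableRel R]
    (hc : ∀ x y : V, R x y ∨ R y x) (hq : Transitive (StrictPart R)) :
    ∀ x y : V,
      (x = y ∨ (x ≠ y ∧ maxFlow (fun u v => if R u v ∧ ¬ R v u then 1 else 0) y x
        ≤ maxFlow (fun u v => if R u v ∧ ¬ R v u then 1 else 0) x y)) ↔ R x y := by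
  set c₀ : V → V → ℕ := fun u v => if R u v ∧ ¬ R v u then 1 else 0 with hc₀
  have hedge : ∀ a b : V, 0 < c₀ a b ↔ StrictPart R a b := by
    intro a b
    by_cases h : R a b ∧ ¬ R b a <;> simp [hc₀, h, StrictPart]
  have noflow : ∀ a b : V, ¬ StrictPart R a b → a ≠ b → maxFlow c₀ a b = 0 := by
    intro a b hnS hab
    apply maxFlow_eq_zero
    intro hpath
    have h2 : Relation.ReflTransGen (StrictPart R) a b :=
      Relation.ReflTransGen.mono (fun u v h => (hedge u v).1 h) a b hpath
    rcases rtg_strict hq h2 with rfl | hS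
    · exact hab rfl
    · exact hnS hS
  intro x y
  by_cases hxy : x = y
  · subst hxy
    simp only [true_or, true_iff]
    exact (hc x x).elim id id
  · constructor
    · rintro (rfl | ⟨-, hle⟩)
      · exact absurd rfl hxy
      · by_contra hnR
        have hS : StrictPart R y x := ⟨(hc x y).resolve_left hnR, hnR⟩
        have h1 : 1 ≤ maxFlow c₀ y x := by
          apply maxFlow_ge_one c₀ y x (Ne.symm hxy)
          simp [hc₀, hS.1, hS.2]
        have h0 : maxFlow c₀ x y = 0 :=
          noflow x y (fun h => hnR h.1) hxy
        omega
    · intro hR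
      refine Or.inr ⟨hxy, ?_⟩
      have h0 : maxFlow c₀ y x = 0 :=
        noflow y x (fun h => h.2 hR) (Ne.symm hxy)
      omega

/-- For a complete and quasi-transitive relation `R`, the flow relation of the
network `N_R` equals `R`. -/
theorem stmt5 {V : Type*} [Fintype V] [DecidableEq V]
    (hV : 2 ≤ Fintype.card V) (R : V → V → Prop) [DecidableRel R]
    (hc : CompleteRel R) (hq : QuasiTransitive R) :
    ∀ x y : V,
      FlowRel (fun u v => if R u v ∧ ¬ R v u then 1 else 0) x y ↔ R x y := by
  intro x y
  exact stmt5' hV R hc hq x y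
end
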